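/- Let n ∈ ℕ, p ∈ (0,1), and let A ⊆ {−1,1}ⁿ be an increasing event (closed under raising coordinates from −1 to 1). Then d/dp P_p^n(A) = Σ_{i=1}^n P_p^n(Piv_i(A)) (Russo's formula). -/

import Mathlib

open Finset Function

variable {n : ℕ}

private lemma flip_flip_upd (ω : Fin n → Bool) (i : Fin n) :
    Function.update (Function.update ω i (!ω i)) i (!(Function.update ω i (!ω i) i)) = ω := by
  simp [Function.update_idem]

private lemma g_flip (p : ℝ) (ω : Fin n → Bool) (i : Fin n) (b : Bool) :
    (∏ j ∈ Finset.univ.erase i, (if Function.update ω i b j then p else 1 - p))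
      = ∏ j ∈ Finset.univ.erase i, (if ω j then p else 1 - p) := by
  refine Finset.prod_congr rfl fun j hj => ?_
  rw [Function.update_of_ne (Finset.ne_of_mem_erase hj)]

private lemma pair_cancel (p : ℝ) (A : Finset (Fin n → Bool))
    (hA : ∀ ω ∈ A, ∀ ω' : Fin n → Bool, (∀ i, ω i ≤ ω' i) → ω' ∈ A) (i : Fin n)
    (F : (Fin n → Bool) → ℝ)
    (hFdef : ∀ δ : Fin n → Bool,
      F δ = (if δ ∈ A then (∏ j ∈ Finset.univ.erase i, (if δ j then p else 1 - p))
                * (if δ i then (1:ℝ) else -1) else 0)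
        - (if ¬((δ ∈ A) ↔ (Function.update δ i (!δ i) ∈ A))
            then ∏ j, (if δ j then p else 1 - p) else 0))
    (ω : Fin n → Bool) (hi : ω i = false) :
    F ω + F (Function.update ω i (!ω i)) = 0 := by
  classical
  set σ := Function.update ω i true with hσ
  have hflipω : Function.update ω i (!ω i) = σ := by rw [hi]; rfl
  have hσi : σ i = true := by simp [hσ]
  have hflipσ : Function.update σ i (!σ i) = ω := by
    rw [hσi, Bool.not_true, hσ, Function.update_idem, ← hi, Function.update_eq_self]
  have hg : (∏ j ∈ Finset.univ.erase i, (if σ j then p else 1 - p))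
      = ∏ j ∈ Finset.univ.erase i, (if ω j then p else 1 - p) := g_flip p ω i true
  have hprodω : (∏ j, (if ω j then p else 1 - p))
      = (1 - p) * ∏ j ∈ Finset.univ.erase i, (if ω j then p else 1 - p) := by
    rw [← Finset.mul_prod_erase _ _ (Finset.mem_univ i), hi]
    simp
  have hprodσ : (∏ j, (if σ j then p else 1 - p))
      = p * ∏ j ∈ Finset.univ.erase i, (if ω j then p else 1 - p) := by
    rw [← Finset.mul_prod_erase _ _ (Finset.mem_univ i), hσi, hg]
    simp
  have himp : ω ∈ A → σ ∈ A := by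
    intro h
    refine hA ω h σ fun j => ?_
    rcases eq_or_ne j i with rfl | hji
    · simp [hσ]
    · simp [hσ, Function.update_of_ne hji, le_refl]
  rw [hFdef ω, hflipω, hFdef σ, hflipσ, hi, hσi, hprodω, hprodσ, hg]
  by_cases ha : ω ∈ A
  · have hb : σ ∈ A := himp ha
    simp [ha, hb]
  · by_cases hb : σ ∈ A
    · have h1 : ¬((ω ∈ A) ↔ (σ ∈ A)) := by simp [ha, hb]
      have h2 : ¬((σ ∈ A) ↔ (ω ∈ A)) := by simp [ha, hb]
      rw [if_neg ha, if_pos hb, if_pos h1, if_pos h2]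
      simp only [Bool.false_eq_true, ite_false, ite_true]
      ring
    · simp [ha, hb]

private lemma key (p : ℝ) (A : Finset (Fin n → Bool))
    (hA : ∀ ω ∈ A, ∀ ω' : Fin n → Bool, (∀ i, ω i ≤ ω' i) → ω' ∈ A) (i : Fin n) :
    (∑ ω ∈ A, (∏ j ∈ Finset.univ.erase i, (if ω j then p else 1 - p))
        * (if ω i then (1:ℝ) else -1))
      = ∑ ω ∈ Finset.univ.filter
            (fun ω : Fin n → Bool =>
              ¬((ω ∈ A) ↔ (Function.update ω i (!ω i) ∈ A))),
          ∏ j, (if ω j then p else 1 - p) := by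
  classical
  have h1 : (∑ ω ∈ A, (∏ j ∈ Finset.univ.erase i, (if ω j then p else 1 - p))
        * (if ω i then (1:ℝ) else -1))
      = ∑ ω : Fin n → Bool, (if ω ∈ A then
          (∏ j ∈ Finset.univ.erase i, (if ω j then p else 1 - p))
            * (if ω i then (1:ℝ) else -1) else 0) := by
    rw [Finset.sum_ite_mem, Finset.univ_inter]
  have h2 : (∑ ω ∈ Finset.univ.filter
        (fun ω : Fin n → Bool => ¬((ω ∈ A) ↔ (Function.update ω i (!ω i) ∈ A))),
        ∏ j, (if ω j then p else 1 - p))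
      = ∑ ω : Fin n → Bool,
          (if ¬((ω ∈ A) ↔ (Function.update ω i (!ω i) ∈ A))
            then ∏ j, (if ω j then p else 1 - p) else 0) := by
    rw [Finset.sum_filter]
  rw [h1, h2, ← sub_eq_zero, ← Finset.sum_sub_distrib]
  have hFdef : ∀ δ : Fin n → Bool,
      (fun δ : Fin n → Bool =>
        (if δ ∈ A then (∏ j ∈ Finset.univ.erase i, (if δ j then p else 1 - p))
              * (if δ i then (1:ℝ) else -1) else 0)
          - (if ¬((δ ∈ A) ↔ (Function.update δ i (!δ i) ∈ A))
              then ∏ j, (if δ j then p else 1 - p) else 0)) δ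
      = (if δ ∈ A then (∏ j ∈ Finset.univ.erase i, (if δ j then p else 1 - p))
              * (if δ i then (1:ℝ) else -1) else 0)
          - (if ¬((δ ∈ A) ↔ (Function.update δ i (!δ i) ∈ A))
              then ∏ j, (if δ j then p else 1 - p) else 0) := fun δ => rfl
  refine Finset.sum_ninvolution (fun ω => Function.update ω i (!ω i))
    (fun ω => ?_) (fun ω hω h => ?_) (fun _ => Finset.mem_univ _) (fun ω => flip_flip_upd ω i)
  · rcases Bool.eq_false_or_eq_true (ω i) with hc | hc
    · have hc' : (Function.update ω i (!ω i)) i = false := by simp [hc]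
      have h := pair_cancel p A hA i _ hFdef (Function.update ω i (!ω i)) hc'
      rw [flip_flip_upd ω i] at h
      beta_reduce
      rw [flip_flip_upd ω i, add_comm]
      exact h
    · exact pair_cancel p A hA i _ hFdef ω hc
  · have := congrFun h i
    simp at this

theorem stmt6 (n : ℕ) (p : ℝ) (hp : p ∈ Set.Ioo (0:ℝ) 1)
    (A : Finset (Fin n → Bool))
    (hA : ∀ ω ∈ A, ∀ ω' : Fin n → Bool, (∀ i, ω i ≤ ω' i) → ω' ∈ A) :
    HasDerivAt (fun q : ℝ => ∑ ω ∈ A, ∏ i, (if ω i then q else 1 - q))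
      (∑ i : Fin n,
        ∑ ω ∈ Finset.univ.filter
            (fun ω : Fin n → Bool =>
              ¬((ω ∈ A) ↔ (Function.update ω i (!ω i) ∈ A))),
          ∏ j, (if ω j then p else 1 - p)) p := by
  classical
  have hterm : ∀ ω : Fin n → Bool,
      HasDerivAt (fun q : ℝ => ∏ i, (if ω i then q else 1 - q))
        (∑ i : Fin n, (∏ j ∈ Finset.univ.erase i, (if ω j then p else 1 - p)) *
          (if ω i then (1:ℝ) else -1)) p := by
    intro ω
    have := HasDerivAt.fun_finsetProd (u := Finset.univ)
      (f := fun (i : Fin n) (q : ℝ) => if ω i then q else 1 - q)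
      (f' := fun i => if ω i then (1:ℝ) else -1) (x := p) ?_
    · simpa [smul_eq_mul] using this
    · intro i _
      rcases Bool.eq_false_or_eq_true (ω i) with h | h <;> simp only [h]
      · simpa using hasDerivAt_id' p
      · simpa using ((hasDerivAt_const p (1:ℝ)).fun_sub (hasDerivAt_id' p))
  have hsum := HasDerivAt.fun_sum (fun ω (_ : ω ∈ A) => hterm ω)
  have heq : (∑ ω ∈ A, ∑ i : Fin n,
      (∏ j ∈ Finset.univ.erase i, (if ω j then p else 1 - p)) * (if ω i then (1:ℝ) else -1))
      = ∑ i : Fin n,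
        ∑ ω ∈ Finset.univ.filter
            (fun ω : Fin n → Bool =>
              ¬((ω ∈ A) ↔ (Function.update ω i (!ω i) ∈ A))),
          ∏ j, (if ω j then p else 1 - p) := by
    rw [Finset.sum_comm]
    exact Finset.sum_congr rfl fun i _ => key p A hA i
  exact heq ▸ hsum
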